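/- Let λ = 100, φ(x) = 100·tanh(x/100), and define the bilinear form B(w) = 2∫_ℝ φ'(x) w'(x)² dx - (1/2)∫_ℝ φ'''(x) w(x)² dx for real-valued w with w, w' square-integrable. There exists C > 0 such that for every odd function u = u₁ + i·u₂ : ℝ → ℂ (u₁, u₂ real-valued, continuously differentiable, with u, u' square-integrable), ∫_ℝ sech(x)(|u'(x)|² + |u(x)|²) dx ≤ C·(B(u₁) + B(u₂)). -/

import Mathlib

set_option maxHeartbeats 1000000

open MeasureTheory Real Filter Topology


noncomputable def P1 (x : ℝ) : ℝ := 1 / Real.cosh (x/100) ^ 2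
noncomputable def P2 (x : ℝ) : ℝ := -(1/50) * (Real.sinh (x/100) / Real.cosh (x/100) ^ 3)
noncomputable def P3 (x : ℝ) : ℝ := (2 * Real.sinh (x/100) ^ 2 - 1) / (5000 * Real.cosh (x/100) ^ 4)

lemma cosh_ne (y : ℝ) : Real.cosh y ≠ 0 := (Real.cosh_pos y).ne'

lemma hasDerivAt_tanh (y : ℝ) : HasDerivAt Real.tanh (1 / Real.cosh y ^ 2) y := by
  have h := (Real.hasDerivAt_sinh y).div (Real.hasDerivAt_cosh y) (cosh_ne y)
  have : Real.tanh = fun y => Real.sinh y / Real.cosh y := by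
    funext z; exact Real.tanh_eq_sinh_div_cosh z
  rw [this]
  refine h.congr_deriv (Eq.symm ?_)
  have := Real.cosh_sq_sub_sinh_sq y
  field_simp
  nlinarith [this]

lemma hasDerivAt_inner (x : ℝ) : HasDerivAt (fun y : ℝ => y / 100) (1/100) x := by
  simpa using (hasDerivAt_id x).div_const 100

lemma phi_hasDerivAt (x : ℝ) :
    HasDerivAt (fun y : ℝ => 100 * Real.tanh (y / 100)) (P1 x) x := by
  have h := ((hasDerivAt_tanh (x/100)).comp x (hasDerivAt_inner x)).const_mul 100
  refine h.congr_deriv (Eq.symm ?_)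
  unfold P1; ring

lemma coshc_hasDerivAt (x : ℝ) :
    HasDerivAt (fun y : ℝ => Real.cosh (y/100)) (Real.sinh (x/100) / 100) x := by
  have h := (Real.hasDerivAt_cosh (x/100)).comp x (hasDerivAt_inner x)
  refine h.congr_deriv (Eq.symm ?_); ring

lemma sinhc_hasDerivAt (x : ℝ) :
    HasDerivAt (fun y : ℝ => Real.sinh (y/100)) (Real.cosh (x/100) / 100) x := by
  have h := (Real.hasDerivAt_sinh (x/100)).comp x (hasDerivAt_inner x)
  refine h.congr_deriv (Eq.symm ?_); ring

lemma P1_hasDerivAt (x : ℝ) : HasDerivAt P1 (P2 x) x := by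
  have hc2 : HasDerivAt (fun y : ℝ => Real.cosh (y/100) ^ 2)
      (2 * Real.cosh (x/100) ^ 1 * (Real.sinh (x/100)/100)) x := by
    simpa using (coshc_hasDerivAt x).fun_pow 2
  have h := (hasDerivAt_const x (1:ℝ)).div hc2 (by positivity)
  have : P1 = fun y : ℝ => 1 / Real.cosh (y/100) ^ 2 := rfl
  rw [this]
  refine h.congr_deriv (Eq.symm ?_)
  unfold P2
  have hc := cosh_ne (x/100)
  field_simp
  ring

lemma P2_hasDerivAt (x : ℝ) : HasDerivAt P2 (P3 x) x := by
  have hc3 : HasDerivAt (fun y : ℝ => Real.cosh (y/100) ^ 3)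
      (3 * Real.cosh (x/100) ^ 2 * (Real.sinh (x/100)/100)) x := by
    simpa using (coshc_hasDerivAt x).fun_pow 3
  have h := (((sinhc_hasDerivAt x).div hc3 (by positivity))).const_mul (-(1/50) : ℝ)
  have : P2 = fun y : ℝ => -(1/50) * (Real.sinh (y/100) / Real.cosh (y/100) ^ 3) := rfl
  rw [this]
  refine h.congr_deriv (Eq.symm ?_)
  unfold P3
  have hc := cosh_ne (x/100)
  have hs := Real.cosh_sq_sub_sinh_sq (x/100)
  field_simp
  nlinarith [hs, Real.cosh_pos (x/100), sq_nonneg (Real.sinh (x/100)), sq_nonneg (Real.cosh (x/100))]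

lemma deriv_phi : deriv (fun y : ℝ => 100 * Real.tanh (y / 100)) = P1 :=
  funext fun x => (phi_hasDerivAt x).deriv

lemma iteratedDeriv_three_phi :
    iteratedDeriv 3 (fun y : ℝ => 100 * Real.tanh (y / 100)) = P3 := by
  have h1 : deriv (fun y : ℝ => 100 * Real.tanh (y / 100)) = P1 := deriv_phi
  have h2 : deriv P1 = P2 := funext fun x => (P1_hasDerivAt x).deriv
  have h3 : deriv P2 = P3 := funext fun x => (P2_hasDerivAt x).deriv
  rw [show (3:ℕ) = 0+1+1+1 by norm_num]
  rw [iteratedDeriv_succ, iteratedDeriv_succ, iteratedDeriv_succ, iteratedDeriv_zero, h1, h2, h3]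


lemma texp_antideriv (k : ℝ) (hk : 0 < k) (t : ℝ) :
    HasDerivAt (fun t : ℝ => -((t/k + 1/k^2) * Real.exp (-(k*t)))) (t * Real.exp (-(k*t))) t := by
  have h1 : HasDerivAt (fun t : ℝ => t/k + 1/k^2) (1/k) t := by
    have h := ((hasDerivAt_id t).div_const k).add_const (1/k^2)
    refine h.congr_deriv (Eq.symm ?_); simp
  have h2 : HasDerivAt (fun t : ℝ => Real.exp (-(k*t))) (Real.exp (-(k*t)) * (-k)) t := by
    have : HasDerivAt (fun t : ℝ => -(k*t)) (-k) t := by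
      simpa using ((hasDerivAt_id t).const_mul k).fun_neg
    exact (Real.hasDerivAt_exp _).comp t this
  have h := (h1.mul h2).neg
  refine h.congr_deriv (Eq.symm ?_)
  field_simp
  ring

lemma texp_tendsto (k : ℝ) (hk : 0 < k) :
    Tendsto (fun t : ℝ => -((t/k + 1/k^2) * Real.exp (-(k*t)))) atTop (𝓝 0) := by
  have hkt : Tendsto (fun t : ℝ => k * t) atTop atTop :=
    Tendsto.const_mul_atTop hk tendsto_id
  have hxe : Tendsto (fun x : ℝ => x ^ 1 * Real.exp (-x)) atTop (𝓝 0) :=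
    tendsto_pow_mul_exp_neg_atTop_nhds_zero 1
  have he : Tendsto (fun t : ℝ => Real.exp (-(k*t))) atTop (𝓝 0) :=
    Real.tendsto_exp_neg_atTop_nhds_zero.comp hkt
  have hx : Tendsto (fun t : ℝ => (k*t) ^ 1 * Real.exp (-(k*t))) atTop (𝓝 0) := hxe.comp hkt
  have := ((hx.const_mul (1/k^2)).add (he.const_mul (1/k^2))).neg
  have heq : (fun t : ℝ => -((1/k^2) * ((k*t) ^ 1 * Real.exp (-(k*t))) + (1/k^2) * Real.exp (-(k*t))))
      = fun t : ℝ => -((t/k + 1/k^2) * Real.exp (-(k*t))) := by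
    funext t; field_simp
  rw [heq] at this
  simpa using this

lemma texp_integrableOn (k : ℝ) (hk : 0 < k) :
    IntegrableOn (fun t : ℝ => t * Real.exp (-(k*t))) (Set.Ioi 0) := by
  refine integrableOn_Ioi_deriv_of_nonneg' (fun x _ => texp_antideriv k hk x)
    (fun x hx => by
      have hx' : (0:ℝ) < x := hx
      positivity) (texp_tendsto k hk)

lemma texp_integral (k : ℝ) (hk : 0 < k) :
    (∫ t in Set.Ioi (0:ℝ), t * Real.exp (-(k*t))) = 1/k^2 := by
  rw [integral_Ioi_of_hasDerivAt_of_tendsto' (fun x _ => texp_antideriv k hk x)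
    (texp_integrableOn k hk) (texp_tendsto k hk)]
  simp

lemma neg_embedding : MeasurableEmbedding (fun x : ℝ => -x) :=
  (Homeomorph.neg ℝ).isClosedEmbedding.measurableEmbedding

lemma integrableOn_Iic_comp_neg {f : ℝ → ℝ} (h : IntegrableOn f (Set.Ioi (0:ℝ))) :
    IntegrableOn (fun x => f (-x)) (Set.Iic (0:ℝ)) := by
  have hIci : IntegrableOn f (Set.Ici (0:ℝ)) := by
    rwa [integrableOn_Ici_iff_integrableOn_Ioi]
  have hmap : (volume.map (fun x : ℝ => -x)).restrict (Set.Ici (0:ℝ))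
      = ((volume.restrict (Set.Iic (0:ℝ))).map (fun x : ℝ => -x)) := by
    rw [Measure.restrict_map neg_embedding.measurable measurableSet_Ici]
    congr 1
    ext x
    simp
  have hiff := neg_embedding.integrable_map_iff (g := f) (μ := volume.restrict (Set.Iic (0:ℝ)))
  rw [← hmap, Measure.map_neg_eq_self (volume : Measure ℝ)] at hiff
  exact hiff.mp hIci

lemma absexp_integrable (k : ℝ) (hk : 0 < k) :
    Integrable (fun x : ℝ => |x| * Real.exp (-(k*|x|))) := by
  rw [← integrableOn_univ, ← Set.Iic_union_Ioi (a := (0:ℝ)), integrableOn_union]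
  constructor
  · have h := integrableOn_Iic_comp_neg (texp_integrableOn k hk)
    refine h.congr_fun (fun x hx => ?_) measurableSet_Iic
    have : x ≤ 0 := hx
    rw [abs_of_nonpos this]
  · refine (texp_integrableOn k hk).congr_fun (fun x hx => ?_) measurableSet_Ioi
    have : (0:ℝ) < x := hx
    rw [abs_of_pos this]

lemma absexp_integral (k : ℝ) (hk : 0 < k) :
    (∫ x : ℝ, |x| * Real.exp (-(k*|x|))) = 2/k^2 := by
  have : (∫ x : ℝ, |x| * Real.exp (-(k*|x|)))
      = ∫ x : ℝ, (fun t : ℝ => t * Real.exp (-(k*t))) |x| := by norm_num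
  rw [this, integral_comp_abs (f := fun t : ℝ => t * Real.exp (-(k*t))), texp_integral k hk]
  ring


lemma limit_zero_of_integrable {h : ℝ → ℝ} (hnn : ∀ x, 0 ≤ h x) (hint : Integrable h)
    {L : ℝ} (hlim : Tendsto h atTop (𝓝 L)) : L = 0 := by
  by_contra hL
  have hL0 : 0 ≤ L := ge_of_tendsto hlim (Eventually.of_forall hnn)
  have hLpos : 0 < L := lt_of_le_of_ne hL0 (Ne.symm hL)
  have hev : ∀ᶠ x in atTop, L/2 < h x := hlim.eventually (eventually_gt_nhds (by linarith))
  obtain ⟨A, hA⟩ := hev.exists_forall_of_atTop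
  have hconst : Integrable (fun _ : ℝ => L/2) (volume.restrict (Set.Ioi A)) := by
    refine Integrable.mono' (hint.restrict (s := Set.Ioi A)) aestronglyMeasurable_const ?_
    refine (ae_restrict_iff' measurableSet_Ioi).mpr (Eventually.of_forall (fun x hx => ?_))
    have := hA x (le_of_lt hx)
    rw [Real.norm_eq_abs, abs_of_pos (by linarith)]
    linarith
  rw [integrable_const_iff] at hconst
  rcases hconst with h0 | hfin
  · exact absurd h0 (by positivity)
  · rw [isFiniteMeasure_restrict, Real.volume_Ioi] at hfin
    exact absurd hfin (by simp)

lemma cauchy_schwarz_interval {g : ℝ → ℝ} (hg : Continuous g) {x : ℝ} (hx : 0 ≤ x) :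
    (∫ t in (0:ℝ)..x, g t) ^ 2 ≤ x * ∫ t in (0:ℝ)..x, (g t)^2 := by
  rcases eq_or_lt_of_le hx with rfl | hx'
  · simp
  set A := ∫ t in (0:ℝ)..x, g t with hA
  set J := ∫ t in (0:ℝ)..x, (g t)^2 with hJ
  have hnn : 0 ≤ ∫ t in (0:ℝ)..x, (g t - A/x)^2 :=
    intervalIntegral.integral_nonneg hx (fun t _ => sq_nonneg _)
  have hexp : (∫ t in (0:ℝ)..x, (g t - A/x)^2) = J - 2*(A/x)*A + (A/x)^2 * x := by
    have h1 : (fun t => (g t - A/x)^2) = fun t => (g t)^2 - (2*(A/x)) * g t + (A/x)^2 := by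
      funext t; ring
    rw [h1]
    rw [intervalIntegral.integral_add (((hg.fun_pow 2).intervalIntegrable 0 x).sub
          ((hg.intervalIntegrable 0 x).const_mul _)) (intervalIntegrable_const),
        intervalIntegral.integral_sub ((hg.fun_pow 2).intervalIntegrable 0 x)
          ((hg.intervalIntegrable 0 x).const_mul _),
        intervalIntegral.integral_const_mul, intervalIntegral.integral_const]
    rw [← hA, ← hJ]
    simp only [smul_eq_mul]
    ring
  rw [hexp] at hnn
  have hx0 : x ≠ 0 := ne_of_gt hx'
  have : 0 ≤ J - A^2/x := by
    have : J - 2*(A/x)*A + (A/x)^2 * x = J - A^2/x := by field_simp; ring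
    linarith [this ▸ hnn]
  calc A^2 = (A^2/x) * x := by field_simp
  _ ≤ J * x := by apply mul_le_mul_of_nonneg_right _ hx; linarith
  _ = x * J := mul_comm _ _


lemma one_le_cosh' (x : ℝ) : 1 ≤ Real.cosh x := by
  rw [Real.cosh_eq]
  have h1 := Real.exp_pos x
  have h2 := Real.exp_pos (-x)
  have h3 : Real.exp x * Real.exp (-x) = 1 := by
    rw [← Real.exp_add]; simp
  nlinarith [sq_nonneg (Real.exp x - 1)]

lemma sech_le_exp (x : ℝ) : 1 / Real.cosh x ≤ 2 * Real.exp (-|x|) := by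
  have hc := Real.cosh_pos x
  have he : Real.exp |x| ≤ 2 * Real.cosh x := by
    rw [Real.cosh_eq]
    rcases abs_cases x with ⟨h, _⟩ | ⟨h, _⟩ <;> rw [h] <;>
      nlinarith [Real.exp_pos x, Real.exp_pos (-x)]
  rw [div_le_iff₀ hc]
  have h1 : Real.exp (-|x|) * Real.exp |x| = 1 := by rw [← Real.exp_add]; simp
  nlinarith [Real.exp_pos (-|x|), Real.exp_pos |x|]

lemma cosh_le_exp_abs (x : ℝ) : Real.cosh x ≤ Real.exp |x| := by
  rw [Real.cosh_eq]
  have h1 : Real.exp x ≤ Real.exp |x| := Real.exp_le_exp.mpr (le_abs_self x)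
  have h2 : Real.exp (-x) ≤ Real.exp |x| := Real.exp_le_exp.mpr (neg_le_abs x)
  linarith

lemma sinh_sq_le_cosh_sq (x : ℝ) : Real.sinh x ^ 2 ≤ Real.cosh x ^ 2 := by
  nlinarith [Real.cosh_sq_sub_sinh_sq x, sq_nonneg (Real.sinh x)]

-- 1/cosh(x/100)^2 ≤ 4 E - 8 E^2 + 12 E^3  with E = exp(-(1/50)*|x|)
lemma sech_sq_bound (x : ℝ) :
    1 / Real.cosh (x/100) ^ 2 ≤ 4 * Real.exp (-(1/50*|x|)) - 8 * Real.exp (-(1/25*|x|))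
      + 12 * Real.exp (-(3/50*|x|)) := by
  set q := Real.exp (-(|x|/100)) with hq
  have hq0 : 0 < q := Real.exp_pos _
  have hq1 : q ≤ 1 := by
    rw [hq]
    exact Real.exp_le_one_iff.mpr (neg_nonpos.mpr (by positivity))
  have hE1 : Real.exp (-(1/50*|x|)) = q ^ 2 := by
    rw [hq, ← Real.exp_nat_mul]; norm_num; ring_nf
  have hE2 : Real.exp (-(1/25*|x|)) = q ^ 4 := by
    rw [hq, ← Real.exp_nat_mul]; norm_num; ring_nf
  have hE3 : Real.exp (-(3/50*|x|)) = q ^ 6 := by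
    rw [hq, ← Real.exp_nat_mul]; norm_num; ring_nf
  have hcosh : Real.cosh (x/100) = (1/q + q)/2 := by
    have habs : Real.cosh (x/100) = Real.cosh (|x|/100) := by
      rw [← Real.cosh_abs (x/100), abs_div]
      norm_num
    rw [habs, Real.cosh_eq, hq, Real.exp_neg, one_div, inv_inv]
  rw [hE1, hE2, hE3, hcosh]
  have hden : (0:ℝ) < ((1/q + q)/2) ^ 2 := by positivity
  rw [div_le_iff₀ hden]
  have key : (4*q^2 - 8*q^4 + 12*q^6) * ((1/q + q)/2)^2 = (1 - 2*q^2 + 3*q^4) * (1 + q^2)^2 := by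
    field_simp
    ring
  rw [key]
  nlinarith [pow_pos hq0 2, pow_pos hq0 4, sq_nonneg q, pow_nonneg hq0.le 6, pow_nonneg hq0.le 8]

-- algebraic core identity
lemma algebra_identity (c s W W' : ℝ) (hc : 0 < c) (h : c^2 - s^2 = 1) :
    (1/50) * (((c/100*c - s*(s/100))/c^2) * (W/c)^2 + (s/c) * (2*(W/c)*(W'/c - W*s/(100*c^2))))
    = 2*(1/c^2)*W'^2 - (1/2)*((2*s^2-1)/(5000*c^4))*W^2
      - 2*(W'/c - W*s/(100*c^2))^2 + (1/10000)*((W/c)^2/c^2) := by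
  have hc0 : c ≠ 0 := hc.ne'
  field_simp
  ring_nf
  linear_combination (10000000000 * W^2) * h


noncomputable def vv (w : ℝ → ℝ) (x : ℝ) : ℝ := w x / Real.cosh (x/100)
noncomputable def dv (w : ℝ → ℝ) (x : ℝ) : ℝ :=
  deriv w x / Real.cosh (x/100) - w x * Real.sinh (x/100) / (100 * Real.cosh (x/100)^2)

lemma P1_cont : Continuous P1 := by
  unfold P1
  exact continuous_const.div ((Real.continuous_cosh.comp (by continuity)).pow 2)
    (fun x => by positivity)

lemma P3_cont : Continuous P3 := by
  unfold P3
  refine Continuous.div (by continuity) (by continuity) (fun x => by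
    have := Real.cosh_pos (x/100); positivity)

lemma absP1_le (x : ℝ) : |P1 x| ≤ 1 := by
  unfold P1
  rw [abs_of_pos (by positivity), div_le_one (by positivity)]
  nlinarith [one_le_cosh' (x/100)]

lemma absP3_le (x : ℝ) : |P3 x| ≤ 1 := by
  unfold P3
  have h1 := one_le_cosh' (x/100)
  have h2 := sinh_sq_le_cosh_sq (x/100)
  rw [abs_div, abs_of_pos (a := 5000 * Real.cosh (x/100)^4) (by positivity),
    div_le_one (by positivity)]
  have h3 : (1:ℝ) ≤ Real.cosh (x/100)^2 := by nlinarith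
  have h4 : Real.cosh (x/100)^2 ≤ Real.cosh (x/100)^4 := by
    nlinarith [sq_nonneg (Real.cosh (x/100)), h3]
  rw [abs_le]
  constructor <;> nlinarith [sq_nonneg (Real.sinh (x/100))]

theorem key_ineq (w : ℝ → ℝ) (hw : ContDiff ℝ 1 w) (hodd : ∀ x, w (-x) = -w x)
    (hw2 : Integrable (fun x => (w x)^2)) (hw'2 : Integrable (fun x => (deriv w x)^2)) :
    (∫ x : ℝ, (1/Real.cosh x) * ((deriv w x)^2 + (w x)^2)) ≤
      33 * (2 * (∫ x : ℝ, P1 x * (deriv w x)^2) - (1/2) * (∫ x : ℝ, P3 x * (w x)^2)) := by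
  have hwc : Continuous w := hw.continuous
  have hw'c : Continuous (deriv w) := hw.continuous_deriv le_rfl
  have hcontc : Continuous (fun x : ℝ => Real.cosh (x/100)) :=
    Real.continuous_cosh.comp (by continuity)
  have hvc : Continuous (vv w) := by
    unfold vv; exact hwc.div hcontc (fun x => cosh_ne _)
  have hdvc : Continuous (dv w) := by
    unfold dv
    apply Continuous.sub
    · exact hw'c.div hcontc (fun x => cosh_ne _)
    · exact (hwc.mul (Real.continuous_sinh.comp (by continuity))).div (by continuity)
        (fun x => by have := Real.cosh_pos (x/100); positivity)
  have hvd : ∀ x, HasDerivAt (vv w) (dv w x) x := by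
    intro x
    have hw' : HasDerivAt w (deriv w x) x := (hw.differentiable one_ne_zero x).hasDerivAt
    have h := hw'.div (coshc_hasDerivAt x) (cosh_ne _)
    have hc := cosh_ne (x/100)
    refine h.congr_deriv (Eq.symm ?_)
    unfold dv
    field_simp
  have hcosh1 : ∀ x : ℝ, 1 ≤ Real.cosh (x/100) := fun x => one_le_cosh' _
  have hvsq_le : ∀ x, (vv w x)^2 ≤ (w x)^2 := by
    intro x
    unfold vv
    rw [div_pow]
    have h2 : (1:ℝ) ≤ Real.cosh (x/100)^2 := by nlinarith [hcosh1 x]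
    exact div_le_self (sq_nonneg _) h2
  have hIv2 : Integrable (fun x => (vv w x)^2) := by
    refine hw2.mono' ((hvc.pow 2).aestronglyMeasurable) (Eventually.of_forall (fun x => ?_))
    rw [Real.norm_eq_abs, abs_of_nonneg (sq_nonneg _)]
    exact hvsq_le x
  have hdv_bound : ∀ x, (dv w x)^2 ≤ 2*(deriv w x)^2 + 2*(w x)^2 := by
    intro x
    have hc1 := hcosh1 x
    have hcpos := Real.cosh_pos (x/100)
    have hs := sinh_sq_le_cosh_sq (x/100)
    have h1 : (deriv w x / Real.cosh (x/100))^2 ≤ (deriv w x)^2 := by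
      rw [div_pow]; exact div_le_self (sq_nonneg _) (by nlinarith)
    have h2 : (w x * Real.sinh (x/100) / (100 * Real.cosh (x/100)^2))^2 ≤ (w x)^2 := by
      rw [div_pow, div_le_iff₀ (by positivity)]
      have hcc2 : (1:ℝ) ≤ Real.cosh (x/100)^2 := by nlinarith
      have hcc : Real.cosh (x/100)^2 ≤ Real.cosh (x/100)^4 := by
        nlinarith [sq_nonneg (Real.cosh (x/100)), hcc2]
      have key : (w x)^2 * Real.sinh (x/100)^2 ≤ (w x)^2 * (10000 * Real.cosh (x/100)^4) :=
        mul_le_mul_of_nonneg_left (by nlinarith) (sq_nonneg _)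
      rw [mul_pow]
      nlinarith [key]
    unfold dv
    nlinarith [sq_nonneg (deriv w x / Real.cosh (x/100)
      + w x * Real.sinh (x/100) / (100 * Real.cosh (x/100)^2))]
  have hIdv2 : Integrable (fun x => (dv w x)^2) := by
    refine ((hw'2.const_mul 2).add (hw2.const_mul 2)).mono'
      ((hdvc.pow 2).aestronglyMeasurable) (Eventually.of_forall (fun x => ?_))
    rw [Real.norm_eq_abs, abs_of_nonneg (sq_nonneg _)]
    exact hdv_bound x
  set I := ∫ x : ℝ, (dv w x)^2 with hIdef
  have hI0 : 0 ≤ I := integral_nonneg (fun x => sq_nonneg _)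
  -- Hardy
  have hw0 : w 0 = 0 := by have := hodd 0; simp at this; linarith
  have hv0 : vv w 0 = 0 := by unfold vv; rw [hw0]; simp
  have hvodd : ∀ x, vv w (-x) = - vv w x := by
    intro x
    unfold vv
    rw [hodd x, show (-x)/100 = -(x/100) by ring, Real.cosh_neg]
    ring
  have hHardy_nonneg : ∀ x : ℝ, 0 ≤ x → (vv w x)^2 ≤ x * I := by
    intro x hx
    have hftc : ∫ t in (0:ℝ)..x, dv w t = vv w x - vv w 0 :=
      intervalIntegral.integral_eq_sub_of_hasDerivAt (fun t _ => hvd t)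
        (hdvc.intervalIntegrable 0 x)
    have h1 : (vv w x)^2 = (∫ t in (0:ℝ)..x, dv w t)^2 := by rw [hftc, hv0]; ring
    rw [h1]
    have hIoc : (∫ t in (0:ℝ)..x, (dv w t)^2) ≤ I := by
      rw [intervalIntegral.integral_of_le hx]
      exact setIntegral_le_integral hIdv2 (Eventually.of_forall (fun t => sq_nonneg _))
    calc (∫ t in (0:ℝ)..x, dv w t)^2 ≤ x * ∫ t in (0:ℝ)..x, (dv w t)^2 :=
          cauchy_schwarz_interval hdvc hx
      _ ≤ x * I := mul_le_mul_of_nonneg_left hIoc hx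
  have hHardy : ∀ x : ℝ, (vv w x)^2 ≤ |x| * I := by
    intro x
    rcases le_or_gt 0 x with hx | hx
    · rw [abs_of_nonneg hx]; exact hHardy_nonneg x hx
    · have h := hHardy_nonneg (-x) (by linarith)
      rw [hvodd x] at h
      rw [abs_of_neg hx]
      nlinarith [h]
  -- integrable pieces
  have hf1 : Integrable (fun x => P1 x * (deriv w x)^2) := by
    refine hw'2.mono' ((P1_cont.mul (hw'c.pow 2)).aestronglyMeasurable)
      (Eventually.of_forall (fun x => ?_))
    rw [Real.norm_eq_abs, abs_mul, abs_of_nonneg (sq_nonneg (deriv w x))]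
    nlinarith [absP1_le x, sq_nonneg (deriv w x), abs_nonneg (P1 x)]
  have hf2 : Integrable (fun x => P3 x * (w x)^2) := by
    refine hw2.mono' ((P3_cont.mul (hwc.pow 2)).aestronglyMeasurable)
      (Eventually.of_forall (fun x => ?_))
    rw [Real.norm_eq_abs, abs_mul, abs_of_nonneg (sq_nonneg (w x))]
    nlinarith [absP3_le x, sq_nonneg (w x), abs_nonneg (P3 x)]
  have hf4 : Integrable (fun x => (vv w x)^2 / Real.cosh (x/100)^2) := by
    refine hIv2.mono' (((hvc.pow 2).div (hcontc.fun_pow 2)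
      (fun x => by have := Real.cosh_pos (x/100); positivity)).aestronglyMeasurable)
      (Eventually.of_forall (fun x => ?_))
    rw [Real.norm_eq_abs, abs_of_nonneg (by positivity)]
    have h2 : (1:ℝ) ≤ Real.cosh (x/100)^2 := by nlinarith [hcosh1 x]
    exact div_le_self (sq_nonneg _) h2
  -- the exact-derivative correction term
  set G : ℝ → ℝ := fun x => (1/50) * (Real.sinh (x/100) / Real.cosh (x/100) * (vv w x)^2)
    with hGdef
  set DG : ℝ → ℝ := fun x => 2*(P1 x * (deriv w x)^2) - (1/2)*(P3 x * (w x)^2)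
    - 2*((dv w x)^2) + (1/10000)*((vv w x)^2 / Real.cosh (x/100)^2) with hDGdef
  have hGderiv : ∀ x, HasDerivAt G (DG x) x := by
    intro x
    have ht := (sinhc_hasDerivAt x).div (coshc_hasDerivAt x) (cosh_ne _)
    have hv2 : HasDerivAt (fun y => (vv w y)^2) (2 * vv w x * dv w x) x := by
      have := (hvd x).fun_pow 2
      simpa [mul_comm, mul_assoc] using this
    have h := (ht.mul hv2).const_mul (1/50 : ℝ)
    have halg := algebra_identity (Real.cosh (x/100)) (Real.sinh (x/100)) (w x) (deriv w x)
      (Real.cosh_pos _) (Real.cosh_sq_sub_sinh_sq _)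
    refine h.congr_deriv (Eq.symm ?_)
    rw [hDGdef]
    unfold P1 P3 vv dv
    unfold vv dv at *
    simp only [Pi.div_apply]
    linear_combination -halg
  have hDGint : Integrable DG := by
    rw [hDGdef]
    exact (((hf1.const_mul 2).sub (hf2.const_mul (1/2))).sub
      (hIdv2.const_mul 2)).add (hf4.const_mul (1/10000))
  -- limits at infinity
  have hvvdv_int : Integrable (fun x => 2 * vv w x * dv w x) := by
    refine (hIv2.add hIdv2).mono' (((continuous_const.mul hvc).mul hdvc).aestronglyMeasurable)
      (Eventually.of_forall (fun x => ?_))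
    rw [Real.norm_eq_abs]
    simp only [Pi.add_apply]
    rcases abs_cases (2 * vv w x * dv w x) with ⟨h, _⟩ | ⟨h, _⟩ <;> rw [h] <;>
      nlinarith [sq_nonneg (vv w x - dv w x), sq_nonneg (vv w x + dv w x)]
  have hv2Top : Tendsto (fun x => (vv w x)^2) atTop (𝓝 0) := by
    have hd2 : ∀ x, HasDerivAt (fun y => (vv w y)^2) (2 * vv w x * dv w x) x := by
      intro x
      have := (hvd x).fun_pow 2
      simpa [mul_comm, mul_assoc] using this
    have hftc : ∀ x : ℝ, (vv w x)^2 = (vv w 0)^2 + ∫ t in (0:ℝ)..x, 2 * vv w t * dv w t := by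
      intro x
      have h := intervalIntegral.integral_eq_sub_of_hasDerivAt (fun t _ => hd2 t)
        ((((continuous_const.mul hvc).mul hdvc)).intervalIntegrable 0 x)
      linarith [h]
    have htend : Tendsto (fun x => (vv w 0)^2 + ∫ t in (0:ℝ)..x, 2 * vv w t * dv w t) atTop
        (𝓝 ((vv w 0)^2 + ∫ t in Set.Ioi (0:ℝ), 2 * vv w t * dv w t)) :=
      tendsto_const_nhds.add (intervalIntegral_tendsto_integral_Ioi 0
        hvvdv_int.integrableOn tendsto_id)
    have htend2 : Tendsto (fun x => (vv w x)^2) atTop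
        (𝓝 ((vv w 0)^2 + ∫ t in Set.Ioi (0:ℝ), 2 * vv w t * dv w t)) :=
      htend.congr (fun x => (hftc x).symm)
    have hL := limit_zero_of_integrable (fun x => sq_nonneg _) hIv2 htend2
    rwa [hL] at htend2
  have hv2Bot : Tendsto (fun x => (vv w x)^2) atBot (𝓝 0) := by
    have hcomp := hv2Top.comp tendsto_neg_atBot_atTop
    refine hcomp.congr (fun x => ?_)
    show (vv w (-x))^2 = (vv w x)^2
    rw [hvodd x]; ring
  have hGabs : ∀ x, ‖G x‖ ≤ (1/50) * (vv w x)^2 := by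
    intro x
    rw [hGdef]
    have hc := Real.cosh_pos (x/100)
    have hs2 := sinh_sq_le_cosh_sq (x/100)
    have habs : |Real.sinh (x/100) / Real.cosh (x/100)| ≤ 1 := by
      rw [abs_div, abs_of_pos hc, div_le_one hc]
      rcases abs_cases (Real.sinh (x/100)) with ⟨h, _⟩ | ⟨h, _⟩ <;> nlinarith
    rw [Real.norm_eq_abs, abs_mul, abs_mul, abs_of_nonneg (sq_nonneg (vv w x)),
      abs_of_pos (show (0:ℝ) < 1/50 by norm_num)]
    nlinarith [sq_nonneg (vv w x), abs_nonneg (Real.sinh (x/100) / Real.cosh (x/100))]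
  have hGTop : Tendsto G atTop (𝓝 0) := by
    refine squeeze_zero_norm hGabs ?_
    simpa using hv2Top.const_mul (1/50 : ℝ)
  have hGBot : Tendsto G atBot (𝓝 0) := by
    refine squeeze_zero_norm hGabs ?_
    simpa using hv2Bot.const_mul (1/50 : ℝ)
  have hG0 : G 0 = 0 := by
    rw [hGdef]; norm_num
  have hIoiDG : ∫ x in Set.Ioi (0:ℝ), DG x = 0 - G 0 :=
    integral_Ioi_of_hasDerivAt_of_tendsto' (fun x _ => hGderiv x) hDGint.integrableOn hGTop
  have hIicDG : ∫ x in Set.Iic (0:ℝ), DG x = G 0 - 0 :=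
    integral_Iic_of_hasDerivAt_of_tendsto' (fun x _ => hGderiv x) hDGint.integrableOn hGBot
  have hDG0 : ∫ x : ℝ, DG x = 0 := by
    have h := intervalIntegral.integral_Iic_add_Ioi (b := (0:ℝ)) hDGint.integrableOn hDGint.integrableOn
    rw [hIoiDG, hIicDG] at h
    linarith [h]
  have hsplit : ∫ x : ℝ, DG x = 2*(∫ x : ℝ, P1 x * (deriv w x)^2)
      - (1/2)*(∫ x : ℝ, P3 x * (w x)^2) - 2*I
      + (1/10000)*(∫ x : ℝ, (vv w x)^2 / Real.cosh (x/100)^2) := by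
    have ha : Integrable (fun x : ℝ => 2*(P1 x * (deriv w x)^2)) := by exact hf1.const_mul 2
    have hb : Integrable (fun x : ℝ => (1/2)*(P3 x * (w x)^2)) := by exact hf2.const_mul (1/2)
    have hcc : Integrable (fun x : ℝ => 2*((dv w x)^2)) := by exact hIdv2.const_mul 2
    have hdd : Integrable (fun x : ℝ => (1/10000)*((vv w x)^2 / Real.cosh (x/100)^2)) := by
      exact hf4.const_mul (1/10000)
    have hab : Integrable (fun x : ℝ => 2*(P1 x * (deriv w x)^2) - (1/2)*(P3 x * (w x)^2)) := by
      exact ha.sub hb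
    have habc : Integrable (fun x : ℝ => 2*(P1 x * (deriv w x)^2) - (1/2)*(P3 x * (w x)^2)
        - 2*((dv w x)^2)) := by exact hab.sub hcc
    rw [hDGdef, hIdef]
    rw [show (fun x : ℝ => 2 * (P1 x * deriv w x ^ 2) - 1 / 2 * (P3 x * w x ^ 2) - 2 * dv w x ^ 2 +
      1 / 10000 * (vv w x ^ 2 / Real.cosh (x / 100) ^ 2)) = (fun x : ℝ =>
      (2 * (P1 x * deriv w x ^ 2) - 1 / 2 * (P3 x * w x ^ 2) - 2 * dv w x ^ 2) +
      1 / 10000 * (vv w x ^ 2 / Real.cosh (x / 100) ^ 2)) from rfl,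
      integral_add habc hdd, integral_sub hab hcc, integral_sub ha hb,
      integral_const_mul, integral_const_mul, integral_const_mul, integral_const_mul]
  -- bound on the f4 integral
  have hf4le : (∫ x : ℝ, (vv w x)^2 / Real.cosh (x/100)^2) ≤ (50000/3) * I := by
    have hMint : Integrable (fun x : ℝ =>
        (4*( |x| * Real.exp (-(1/50*|x|))) - 8*( |x| * Real.exp (-(1/25*|x|)))
          + 12*( |x| * Real.exp (-(3/50*|x|)))) * I) := by
      exact ((((absexp_integrable (1/50) (by norm_num)).const_mul 4).sub
        ((absexp_integrable (1/25) (by norm_num)).const_mul 8)).add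
        ((absexp_integrable (3/50) (by norm_num)).const_mul 12)).mul_const I
    have hpt : ∀ x : ℝ, (vv w x)^2 / Real.cosh (x/100)^2 ≤
        (4*( |x| * Real.exp (-(1/50*|x|))) - 8*( |x| * Real.exp (-(1/25*|x|)))
          + 12*( |x| * Real.exp (-(3/50*|x|)))) * I := by
      intro x
      have hc := Real.cosh_pos (x/100)
      have h1 : (vv w x)^2 / Real.cosh (x/100)^2 ≤ ( |x| * I) * (1/Real.cosh (x/100)^2) := by
        rw [div_eq_mul_one_div]
        exact mul_le_mul_of_nonneg_right (hHardy x) (by positivity)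
      have h2 : ( |x| * I) * (1/Real.cosh (x/100)^2) ≤ ( |x| * I) *
          (4 * Real.exp (-(1/50*|x|)) - 8 * Real.exp (-(1/25*|x|))
            + 12 * Real.exp (-(3/50*|x|))) :=
        mul_le_mul_of_nonneg_left (sech_sq_bound x) (by positivity)
      calc (vv w x)^2 / Real.cosh (x/100)^2 ≤ ( |x| * I) *
          (4 * Real.exp (-(1/50*|x|)) - 8 * Real.exp (-(1/25*|x|))
            + 12 * Real.exp (-(3/50*|x|))) := le_trans h1 h2
        _ = (4*( |x| * Real.exp (-(1/50*|x|))) - 8*( |x| * Real.exp (-(1/25*|x|)))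
          + 12*( |x| * Real.exp (-(3/50*|x|)))) * I := by ring
    calc (∫ x : ℝ, (vv w x)^2 / Real.cosh (x/100)^2)
        ≤ ∫ x : ℝ, (4*( |x| * Real.exp (-(1/50*|x|))) - 8*( |x| * Real.exp (-(1/25*|x|)))
          + 12*( |x| * Real.exp (-(3/50*|x|)))) * I := integral_mono hf4 hMint hpt
      _ = (4*(2/(1/50:ℝ)^2) - 8*(2/(1/25:ℝ)^2) + 12*(2/(3/50:ℝ)^2)) * I := by
          have ha : Integrable (fun x : ℝ => 4*( |x| * Real.exp (-(1/50*|x|)))) := by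
            exact (absexp_integrable (1/50) (by norm_num)).const_mul 4
          have hb : Integrable (fun x : ℝ => 8*( |x| * Real.exp (-(1/25*|x|)))) := by
            exact (absexp_integrable (1/25) (by norm_num)).const_mul 8
          have hcc : Integrable (fun x : ℝ => 12*( |x| * Real.exp (-(3/50*|x|)))) := by
            exact (absexp_integrable (3/50) (by norm_num)).const_mul 12
          have hab : Integrable (fun x : ℝ => 4*( |x| * Real.exp (-(1/50*|x|)))
              - 8*( |x| * Real.exp (-(1/25*|x|)))) := by exact ha.sub hb
          rw [integral_mul_const, integral_add (by exact hab) (by exact hcc),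
            integral_sub ha hb,
            integral_const_mul, integral_const_mul, integral_const_mul,
            absexp_integral (1/50) (by norm_num), absexp_integral (1/25) (by norm_num),
            absexp_integral (3/50) (by norm_num)]
      _ = (50000/3) * I := by norm_num
  have hBlow : I/3 ≤ 2*(∫ x : ℝ, P1 x * (deriv w x)^2) - (1/2)*(∫ x : ℝ, P3 x * (w x)^2) := by
    nlinarith [hDG0, hsplit, hf4le, hI0]
  -- LHS bound
  have hLHSpt : ∀ x : ℝ, (1/Real.cosh x)*((deriv w x)^2 + (w x)^2) ≤
      3*( |x| * Real.exp (-(49/50*|x|)))*I + 4*(dv w x)^2 := by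
    intro x
    have hc := Real.cosh_pos (x/100)
    have hc1 := hcosh1 x
    have hs2 := sinh_sq_le_cosh_sq (x/100)
    have hA0 : (0:ℝ) ≤ 1/Real.cosh x := by positivity
    have hA := sech_le_exp x
    have hcsq : Real.cosh (x/100)^2 ≤ Real.exp (1/50*|x|) := by
      have h1 : Real.cosh (x/100) ≤ Real.exp (|x|/100) := by
        have h := cosh_le_exp_abs (x/100)
        rwa [abs_div, (by norm_num : |(100:ℝ)| = 100)] at h
      have h2 : Real.cosh (x/100)^2 ≤ Real.exp (|x|/100) ^ 2 := by
        nlinarith [Real.cosh_pos (x/100)]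
      have h3 : Real.exp (|x|/100) ^ 2 = Real.exp (1/50*|x|) := by
        rw [sq, ← Real.exp_add]
        congr 1
        ring
      rw [h3] at h2
      exact h2
    have hAc2 : (1/Real.cosh x) * Real.cosh (x/100)^2 ≤ 2 * Real.exp (-(49/50*|x|)) := by
      have e5 : -|x| + 1/50*|x| = -(49/50*|x|) := by ring
      calc (1/Real.cosh x) * Real.cosh (x/100)^2
          ≤ (2*Real.exp (-|x|)) * Real.cosh (x/100)^2 :=
            mul_le_mul_of_nonneg_right hA (by positivity)
        _ ≤ (2*Real.exp (-|x|)) * Real.exp (1/50*|x|) :=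
            mul_le_mul_of_nonneg_left hcsq (by positivity)
        _ = 2 * Real.exp (-(49/50*|x|)) := by
            rw [mul_assoc, ← Real.exp_add, e5]
    have hE0 : (0:ℝ) ≤ Real.exp (-(49/50*|x|)) := (Real.exp_pos _).le
    have hE1 : Real.exp (-(49/50*|x|)) ≤ 1 :=
      Real.exp_le_one_iff.mpr (neg_nonpos.mpr (by positivity))
    have hAc2' : (1/Real.cosh x) * Real.cosh (x/100)^2 ≤ 2 := le_trans hAc2 (by linarith)
    have hW : w x = Real.cosh (x/100) * vv w x := by unfold vv; field_simp
    have hW' : deriv w x = (Real.sinh (x/100)/100) * vv w x + Real.cosh (x/100) * dv w x := by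
      unfold dv vv
      field_simp
      ring
    have claimW : (1/Real.cosh x) * (w x)^2 ≤ 2*Real.exp (-(49/50*|x|)) * (vv w x)^2 := by
      rw [hW]
      have e : (1/Real.cosh x) * (Real.cosh (x/100) * vv w x)^2
          = ((1/Real.cosh x) * Real.cosh (x/100)^2) * (vv w x)^2 := by ring
      rw [e]
      have := mul_le_mul_of_nonneg_right hAc2 (sq_nonneg (vv w x))
      linarith
    have claimW' : (1/Real.cosh x) * (deriv w x)^2 ≤
        Real.exp (-(49/50*|x|)) * (vv w x)^2 + 4*(dv w x)^2 := by
      rw [hW']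
      have hsq : ((Real.sinh (x/100)/100) * vv w x + Real.cosh (x/100) * dv w x)^2
          ≤ 2*((Real.sinh (x/100)/100) * vv w x)^2 + 2*(Real.cosh (x/100) * dv w x)^2 := by
        nlinarith [sq_nonneg ((Real.sinh (x/100)/100) * vv w x - Real.cosh (x/100) * dv w x)]
      have hstep : (1/Real.cosh x) * ((Real.sinh (x/100)/100) * vv w x
            + Real.cosh (x/100) * dv w x)^2
          ≤ (1/Real.cosh x) * (2*((Real.sinh (x/100)/100) * vv w x)^2
            + 2*(Real.cosh (x/100) * dv w x)^2) :=
        mul_le_mul_of_nonneg_left hsq hA0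
      have hdist : (1/Real.cosh x) * (2*((Real.sinh (x/100)/100) * vv w x)^2
            + 2*(Real.cosh (x/100) * dv w x)^2)
          = (1/Real.cosh x) * (2*((Real.sinh (x/100)/100) * vv w x)^2)
            + (1/Real.cosh x) * (2*(Real.cosh (x/100) * dv w x)^2) := by ring
      have t1 : (1/Real.cosh x) * (2*((Real.sinh (x/100)/100) * vv w x)^2)
          ≤ Real.exp (-(49/50*|x|)) * (vv w x)^2 := by
        have e1 : (1/Real.cosh x) * (2*((Real.sinh (x/100)/100) * vv w x)^2)
            = (2/10000) * (((1/Real.cosh x) * Real.sinh (x/100)^2) * (vv w x)^2) := by ring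
        have e2 : (1/Real.cosh x) * Real.sinh (x/100)^2
            ≤ (1/Real.cosh x) * Real.cosh (x/100)^2 :=
          mul_le_mul_of_nonneg_left hs2 hA0
        have e3 : ((1/Real.cosh x) * Real.sinh (x/100)^2) * (vv w x)^2
            ≤ (2*Real.exp (-(49/50*|x|))) * (vv w x)^2 :=
          mul_le_mul_of_nonneg_right (le_trans e2 hAc2) (sq_nonneg _)
        have e4 : (0:ℝ) ≤ Real.exp (-(49/50*|x|)) * (vv w x)^2 :=
          mul_nonneg hE0 (sq_nonneg _)
        rw [e1]
        nlinarith [e3, e4]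
      have t2 : (1/Real.cosh x) * (2*(Real.cosh (x/100) * dv w x)^2) ≤ 4*(dv w x)^2 := by
        have e1 : (1/Real.cosh x) * (2*(Real.cosh (x/100) * dv w x)^2)
            = 2*(((1/Real.cosh x) * Real.cosh (x/100)^2) * (dv w x)^2) := by ring
        have e2 : ((1/Real.cosh x) * Real.cosh (x/100)^2) * (dv w x)^2 ≤ 2 * (dv w x)^2 :=
          mul_le_mul_of_nonneg_right hAc2' (sq_nonneg _)
        rw [e1]
        linarith
      linarith [hstep, hdist ▸ hstep, t1, t2]
    have hEvv : Real.exp (-(49/50*|x|)) * (vv w x)^2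
        ≤ Real.exp (-(49/50*|x|)) * (|x| * I) :=
      mul_le_mul_of_nonneg_left (hHardy x) hE0
    have hT0 : (0:ℝ) ≤ Real.exp (-(49/50*|x|)) * (|x| * I) := by positivity
    have hdist2 : (1/Real.cosh x)*((deriv w x)^2 + (w x)^2)
        = (1/Real.cosh x)*(deriv w x)^2 + (1/Real.cosh x)*(w x)^2 := by ring
    have hgoalE : 3*( |x| * Real.exp (-(49/50*|x|)))*I
        = 3*(Real.exp (-(49/50*|x|)) * (|x| * I)) := by ring
    rw [hdist2, hgoalE]
    linarith [claimW, claimW', hEvv, hT0]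
  have hLHSint : Integrable (fun x : ℝ => (1/Real.cosh x)*((deriv w x)^2 + (w x)^2)) := by
    refine (hw'2.add hw2).mono' ?_ (Eventually.of_forall (fun x => ?_))
    · exact ((continuous_const.div Real.continuous_cosh (fun x => cosh_ne x)).mul
        ((hw'c.pow 2).add (hwc.pow 2))).aestronglyMeasurable
    · rw [Real.norm_eq_abs]
      have hcx := Real.cosh_pos x
      have hc1x := one_le_cosh' x
      have h1 : (0:ℝ) ≤ (deriv w x)^2 + (w x)^2 := by positivity
      rw [abs_of_nonneg (by positivity)]
      have h2 : (1/Real.cosh x) ≤ 1 := by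
        rw [div_le_one hcx]; exact hc1x
      have h3 : (0:ℝ) ≤ 1/Real.cosh x := by positivity
      simp only [Pi.add_apply]
      nlinarith [h1]
  have hRint : Integrable (fun x : ℝ => 3*( |x| * Real.exp (-(49/50*|x|)))*I + 4*(dv w x)^2) := by
    exact (((absexp_integrable (49/50) (by norm_num)).const_mul 3).mul_const I).add
      (hIdv2.const_mul 4)
  have hLHSle : (∫ x : ℝ, (1/Real.cosh x)*((deriv w x)^2 + (w x)^2))
      ≤ 3*(2/(49/50:ℝ)^2)*I + 4*I := by
    calc (∫ x : ℝ, (1/Real.cosh x)*((deriv w x)^2 + (w x)^2))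
        ≤ ∫ x : ℝ, (3*( |x| * Real.exp (-(49/50*|x|)))*I + 4*(dv w x)^2) :=
          integral_mono hLHSint hRint hLHSpt
      _ = 3*(2/(49/50:ℝ)^2)*I + 4*I := by
          have ha : Integrable (fun x : ℝ => 3*( |x| * Real.exp (-(49/50*|x|)))*I) := by
            exact ((absexp_integrable (49/50) (by norm_num)).const_mul 3).mul_const I
          have hb : Integrable (fun x : ℝ => 4*((dv w x)^2)) := by exact hIdv2.const_mul 4
          rw [integral_add ha hb]
          have e1 : (∫ x : ℝ, 3*( |x| * Real.exp (-(49/50*|x|)))*I) = 3*(2/(49/50:ℝ)^2)*I := by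
            rw [integral_mul_const, integral_const_mul, absexp_integral (49/50) (by norm_num)]
          have e2 : (∫ x : ℝ, 4*((dv w x)^2)) = 4*I := by
            rw [integral_const_mul, ← hIdef]
          rw [e1, e2]
  linarith [hLHSle, hBlow, hI0]




lemma sech_weight_integrable {f g : ℝ → ℝ} (hf : Continuous f) (hg : Continuous g)
    (h2 : Integrable (fun x => (f x)^2)) (h3 : Integrable (fun x => (g x)^2)) :
    Integrable (fun x => (1/Real.cosh x) * ((f x)^2 + (g x)^2)) := by
  refine (h2.add h3).mono' ?_ (Eventually.of_forall fun x => ?_)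
  · exact ((continuous_const.div Real.continuous_cosh (fun x => cosh_ne x)).mul
      ((hf.pow 2).add (hg.pow 2))).aestronglyMeasurable
  · rw [Real.norm_eq_abs]
    have hcx := Real.cosh_pos x
    have hc1x := one_le_cosh' x
    rw [abs_of_nonneg (by positivity)]
    have hb : (1/Real.cosh x) ≤ 1 := by rw [div_le_one hcx]; exact hc1x
    have h1 : (0:ℝ) ≤ (f x)^2 + (g x)^2 := by positivity
    simp only [Pi.add_apply]
    nlinarith [h1]

/-- Lemma 2.3 -/
theorem weighted_H1_le_bilinear_form :
    ∃ C > 0, ∀ u : ℝ → ℂ,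
      ContDiff ℝ 1 u →
      (∀ x : ℝ, u (-x) = - u x) →
      Integrable (fun x : ℝ => ‖u x‖ ^ 2) →
      Integrable (fun x : ℝ => ‖deriv u x‖ ^ 2) →
      (∫ x : ℝ, (1 / Real.cosh x) * (‖deriv u x‖ ^ 2 + ‖u x‖ ^ 2))
      ≤ C * ((2 * (∫ x : ℝ, deriv (fun y : ℝ => 100 * Real.tanh (y / 100)) x
                    * (deriv (fun y : ℝ => (u y).re) x) ^ 2)
              - (1 / 2) * (∫ x : ℝ, iteratedDeriv 3 (fun y : ℝ => 100 * Real.tanh (y / 100)) x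
                    * ((u x).re) ^ 2))
          + (2 * (∫ x : ℝ, deriv (fun y : ℝ => 100 * Real.tanh (y / 100)) x
                    * (deriv (fun y : ℝ => (u y).im) x) ^ 2)
              - (1 / 2) * (∫ x : ℝ, iteratedDeriv 3 (fun y : ℝ => 100 * Real.tanh (y / 100)) x
                    * ((u x).im) ^ 2))) := by
  refine ⟨33, by norm_num, ?_⟩
  intro u hu hoddu hu2 hu'2
  have hucont : Continuous u := hu.continuous
  have hud : ∀ x, HasDerivAt u (deriv u x) x := fun x => (hu.differentiable one_ne_zero x).hasDerivAt
  set w1 : ℝ → ℝ := fun y : ℝ => (u y).re with hw1def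
  set w2 : ℝ → ℝ := fun y : ℝ => (u y).im with hw2def
  have hnorm : ∀ z : ℂ, ‖z‖^2 = z.re^2 + z.im^2 := by
    intro z
    rw [Complex.sq_norm, Complex.normSq_apply]
    ring
  have hre : ContDiff ℝ 1 w1 := by
    have h := (Complex.reCLM.contDiff (n := 1)).comp hu
    simpa [hw1def, Function.comp_def] using h
  have him : ContDiff ℝ 1 w2 := by
    have h := (Complex.imCLM.contDiff (n := 1)).comp hu
    simpa [hw2def, Function.comp_def] using h
  have hdre : ∀ x, deriv w1 x = (deriv u x).re := by
    intro x
    have h := Complex.reCLM.hasFDerivAt.comp_hasDerivAt x (hud x)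
    have h2 : HasDerivAt w1 ((deriv u x).re) x := by
      simpa [hw1def, Function.comp_def] using h
    exact h2.deriv
  have hdim : ∀ x, deriv w2 x = (deriv u x).im := by
    intro x
    have h := Complex.imCLM.hasFDerivAt.comp_hasDerivAt x (hud x)
    have h2 : HasDerivAt w2 ((deriv u x).im) x := by
      simpa [hw2def, Function.comp_def] using h
    exact h2.deriv
  have hodd1 : ∀ x, w1 (-x) = -w1 x := by
    intro x; rw [hw1def]; simp only; rw [hoddu x, Complex.neg_re]
  have hodd2 : ∀ x, w2 (-x) = -w2 x := by
    intro x; rw [hw2def]; simp only; rw [hoddu x, Complex.neg_im]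
  have hw1sq : Integrable (fun x => (w1 x)^2) := by
    refine hu2.mono' (((Complex.continuous_re.comp hucont).pow 2).aestronglyMeasurable)
      (Eventually.of_forall fun x => ?_)
    rw [Real.norm_eq_abs, abs_of_nonneg (sq_nonneg _), hnorm (u x)]
    nlinarith [sq_nonneg ((u x).im)]
  have hw2sq : Integrable (fun x => (w2 x)^2) := by
    refine hu2.mono' (((Complex.continuous_im.comp hucont).pow 2).aestronglyMeasurable)
      (Eventually.of_forall fun x => ?_)
    rw [Real.norm_eq_abs, abs_of_nonneg (sq_nonneg _), hnorm (u x)]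
    nlinarith [sq_nonneg ((u x).re)]
  have hw1'sq : Integrable (fun x => (deriv w1 x)^2) := by
    refine hu'2.mono' (((hre.continuous_deriv le_rfl).pow 2).aestronglyMeasurable)
      (Eventually.of_forall fun x => ?_)
    rw [Real.norm_eq_abs, abs_of_nonneg (sq_nonneg _), hnorm (deriv u x), hdre x]
    nlinarith [sq_nonneg ((deriv u x).im)]
  have hw2'sq : Integrable (fun x => (deriv w2 x)^2) := by
    refine hu'2.mono' (((him.continuous_deriv le_rfl).pow 2).aestronglyMeasurable)
      (Eventually.of_forall fun x => ?_)
    rw [Real.norm_eq_abs, abs_of_nonneg (sq_nonneg _), hnorm (deriv u x), hdim x]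
    nlinarith [sq_nonneg ((deriv u x).re)]
  have hk1 := key_ineq w1 hre hodd1 hw1sq hw1'sq
  have hk2 := key_ineq w2 him hodd2 hw2sq hw2'sq
  have hsplitfun : (fun x : ℝ => (1 / Real.cosh x) * (‖deriv u x‖ ^ 2 + ‖u x‖ ^ 2))
      = fun x : ℝ => (1/Real.cosh x) * ((deriv w1 x)^2 + (w1 x)^2)
        + (1/Real.cosh x) * ((deriv w2 x)^2 + (w2 x)^2) := by
    funext x
    rw [hnorm (deriv u x), hnorm (u x), hdre x, hdim x]
    show (1 / Real.cosh x) * (((deriv u x).re^2 + (deriv u x).im^2)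
      + ((u x).re^2 + (u x).im^2)) = _
    rw [hw1def, hw2def]
    ring
  have hint1 : Integrable (fun x => (1/Real.cosh x) * ((deriv w1 x)^2 + (w1 x)^2)) :=
    sech_weight_integrable (hre.continuous_deriv le_rfl) hre.continuous hw1'sq hw1sq
  have hint2 : Integrable (fun x => (1/Real.cosh x) * ((deriv w2 x)^2 + (w2 x)^2)) :=
    sech_weight_integrable (him.continuous_deriv le_rfl) him.continuous hw2'sq hw2sq
  rw [deriv_phi, iteratedDeriv_three_phi, hsplitfun, integral_add hint1 hint2]
  linarith [hk1, hk2]
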